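/- Let V, W be real inner product spaces with dim V = dim W = n, and let F : Λ²(W) → Λ²(V) be the map on 2-vectors induced by a linear map T : W → V (i.e. F(u∧v) = Tu∧Tv). Suppose |F(ω)| ≤ |ω| for all ω ∈ Λ²(W), and suppose there is an orthonormal basis {ε_1,…,ε_n} of W with |F(ε_i∧ε_j)| = 1 for all i < j. Then the set {F(ε_i∧ε_j) : i<j} is an orthonormal subset of Λ²(V). -/

import Mathlib

/-- If a norm-nonincreasing map `F` on 2-vectors induced by `T : W → V` sends every basis
2-vector `ε_i∧ε_j` (i<j) to a unit vector, then the images form an orthonormal set.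
The second exterior powers are modelled by inner product spaces `LW`, `LV` together with
wedge maps whose inner products are given by the Gram determinant. -/
theorem stmt_11 (n : ℕ)
    {W V LW LV : Type*}
    [NormedAddCommGroup W] [InnerProductSpace ℝ W]
    [NormedAddCommGroup V] [InnerProductSpace ℝ V]
    [NormedAddCommGroup LW] [InnerProductSpace ℝ LW]
    [NormedAddCommGroup LV] [InnerProductSpace ℝ LV]
    (wW : W →ₗ[ℝ] W →ₗ[ℝ] LW) (wV : V →ₗ[ℝ] V →ₗ[ℝ] LV)
    (hWgram : ∀ u1 u2 v1 v2 : W, (inner ℝ (wW u1 u2) (wW v1 v2) : ℝ)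
      = inner ℝ u1 v1 * inner ℝ u2 v2 - inner ℝ u1 v2 * inner ℝ u2 v1)
    (hVgram : ∀ u1 u2 v1 v2 : V, (inner ℝ (wV u1 u2) (wV v1 v2) : ℝ)
      = inner ℝ u1 v1 * inner ℝ u2 v2 - inner ℝ u1 v2 * inner ℝ u2 v1)
    (T : W →ₗ[ℝ] V) (F : LW →ₗ[ℝ] LV)
    (hTF : ∀ u v : W, F (wW u v) = wV (T u) (T v))
    (hcontr : ∀ ω : LW, ‖F ω‖ ≤ ‖ω‖)
    (ε : OrthonormalBasis (Fin n) ℝ W)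
    (hunit : ∀ i j, i < j → ‖F (wW (ε i) (ε j))‖ = 1) :
    (∀ i j, i < j → ‖F (wW (ε i) (ε j))‖ = 1) ∧
    ∀ i j k l, i < j → k < l → (i, j) ≠ (k, l) →
      (inner ℝ (F (wW (ε i) (ε j))) (F (wW (ε k) (ε l))) : ℝ) = 0 := by
  have hON : ∀ i j : Fin n, (inner ℝ (ε i) (ε j) : ℝ) = if i = j then 1 else 0 :=
    orthonormal_iff_ite.mp ε.orthonormal
  refine ⟨hunit, fun i j k l hij hkl hne => ?_⟩
  set a := wW (ε i) (ε j) with ha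
  set b := wW (ε k) (ε l) with hb
  -- inner a b = 0
  have hab : (inner ℝ a b : ℝ) = 0 := by
    rw [ha, hb, hWgram, hON, hON, hON, hON]
    by_cases h1 : i = k
    · have h2 : j ≠ l := by
        intro h; exact hne (by rw [h1, h])
      have h3 : i ≠ l := by intro h; exact absurd (h1 ▸ h ▸ hkl) (lt_irrefl _)
      simp [h2, h3]
    · have h4 : ¬ (i = l ∧ j = k) := by
        rintro ⟨rfl, rfl⟩
        exact absurd (hij.trans hkl) (lt_irrefl _)
      by_cases h5 : i = l
      · have h6 : j ≠ k := fun h => h4 ⟨h5, h⟩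
        simp [h1, h6]
      · simp [h1, h5]
  have hna : ‖a‖ ^ 2 = 1 := by
    have := real_inner_self_eq_norm_sq a
    rw [ha, hWgram, hON, hON, hON, hON] at this
    have hij' : i ≠ j := ne_of_lt hij
    simp [hij'] at this
    rw [ha]; linarith [this]
  have hnb : ‖b‖ ^ 2 = 1 := by
    have := real_inner_self_eq_norm_sq b
    rw [hb, hWgram, hON, hON, hON, hON] at this
    have hkl' : k ≠ l := ne_of_lt hkl
    simp [hkl'] at this
    rw [hb]; linarith [this]
  have hFa : ‖F a‖ = 1 := hunit i j hij
  have hFb : ‖F b‖ = 1 := hunit k l hkl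
  -- key inequalities
  have key : ∀ c : LW, ‖F c‖ ^ 2 ≤ ‖c‖ ^ 2 := fun c =>
    pow_le_pow_left₀ (norm_nonneg _) (hcontr c) 2
  have h1 := key (a + b)
  have h2 := key (a - b)
  rw [map_add] at h1
  rw [map_sub] at h2
  rw [norm_add_sq_real, norm_add_sq_real] at h1
  rw [norm_sub_sq_real, norm_sub_sq_real] at h2
  rw [hab, hna, hnb, hFa, hFb] at h1 h2
  simp only [one_pow, mul_zero] at h1 h2
  linarith
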